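/- (Multi-dimensional Herglotz principle, differentiable case.) Let n ≥ 1, a < b, z_a ∈ ℝ, and let L : ℝ × ℝⁿ × ℝⁿ × ℝ → ℝ be of class C². Let x : ℝ → ℝⁿ be of class C² and z : ℝ → ℝ be of class C¹ with z'(t) = L(t, x(t), x'(t), z(t)) for all t ∈ [a,b] and z(a) = z_a. Assume that for every C² function η : ℝ → ℝⁿ with η(a) = η(b) = 0 there exists a function Z : ℝ × ℝ → ℝ of class C² such that: Z(0,t) = z(t) for all t ∈ [a,b]; ∂Z/∂t(ε,t) = L(t, x(t)+ε·η(t), x'(t)+ε·η'(t), Z(ε,t)) for all ε ∈ ℝ and t ∈ [a,b]; Z(ε,a) = z_a for all ε ∈ ℝ; and ∂Z/∂ε(0,b) = 0. Then for every i ∈ {1,…,n} and all t ∈ [a,b]: (d/dt)[∂L/∂v_i(t, x(t), x'(t), z(t))] = ∂L/∂x_i(t, x(t), x'(t), z(t)) + ∂L/∂z(t, x(t), x'(t), z(t))·∂L/∂v_i(t, x(t), x'(t), z(t)). -/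

import Mathlib

open intervalIntegral MeasureTheory Set

set_option maxHeartbeats 2000000 in
/-- Multi-dimensional Herglotz principle (differentiable case): if `(x,z)` with
`x : ℝ → ℝⁿ` solves `z' = L(t,x,x',z)`, `z(a) = z_a`, and for every admissible
variation `η : ℝ → ℝⁿ` (vanishing at `a` and `b`) there is a `C²` family `Z(ε,t)` of
solutions with `Z(0,·) = z`, `Z(ε,a) = z_a` and `∂Z/∂ε(0,b) = 0`, then for every
coordinate `i` the Herglotz–Euler–Lagrange equation
`d/dt ∂L/∂vᵢ = ∂L/∂xᵢ + ∂L/∂z·∂L/∂vᵢ` holds on `[a,b]`. -/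
theorem stmt_13 (n : ℕ) (hn : 1 ≤ n) (a b z_a : ℝ) (hab : a < b)
    (L : ℝ → (Fin n → ℝ) → (Fin n → ℝ) → ℝ → ℝ)
    (hL : ContDiff ℝ 2
      (fun p : ℝ × (Fin n → ℝ) × (Fin n → ℝ) × ℝ => L p.1 p.2.1 p.2.2.1 p.2.2.2))
    (x : ℝ → Fin n → ℝ) (z : ℝ → ℝ) (hx : ContDiff ℝ 2 x) (hz : ContDiff ℝ 1 z)
    (hzeq : ∀ t ∈ Set.Icc a b, deriv z t = L t (x t) (deriv x t) (z t))
    (hza : z a = z_a)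
    (hvar : ∀ η : ℝ → Fin n → ℝ, ContDiff ℝ 2 η → η a = 0 → η b = 0 →
      ∃ Z : ℝ → ℝ → ℝ,
        ContDiff ℝ 2 (fun p : ℝ × ℝ => Z p.1 p.2) ∧
        (∀ t ∈ Set.Icc a b, Z 0 t = z t) ∧
        (∀ ε : ℝ, ∀ t ∈ Set.Icc a b,
          deriv (fun s => Z ε s) t
            = L t (x t + ε • η t) (deriv x t + ε • deriv η t) (Z ε t)) ∧
        (∀ ε : ℝ, Z ε a = z_a) ∧
        deriv (fun ε => Z ε b) 0 = 0) :
    ∀ i : Fin n, ∀ t ∈ Set.Icc a b,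
      deriv (fun s =>
          deriv (fun vi => L s (x s) (Function.update (deriv x s) i vi) (z s))
            (deriv x s i)) t
        = deriv (fun xi => L t (Function.update (x t) i xi) (deriv x t) (z t)) (x t i)
          + deriv (fun w => L t (x t) (deriv x t) w) (z t)
            * deriv (fun vi => L t (x t) (Function.update (deriv x t) i vi) (z t))
              (deriv x t i) := by
  classical
  intro i t₀ ht₀
  set F : ℝ × (Fin n → ℝ) × (Fin n → ℝ) × ℝ → ℝ :=
    fun p => L p.1 p.2.1 p.2.2.1 p.2.2.2 with hFdef
  have hFd : Differentiable ℝ F := hL.differentiable (by norm_num)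
  set e : Fin n → ℝ := Pi.single i 1 with he
  set dX : ℝ × (Fin n → ℝ) × (Fin n → ℝ) × ℝ := (0, e, 0, 0) with hdX
  set dV : ℝ × (Fin n → ℝ) × (Fin n → ℝ) × ℝ := (0, 0, e, 0) with hdV
  set dZ : ℝ × (Fin n → ℝ) × (Fin n → ℝ) × ℝ := (0, 0, 0, 1) with hdZ
  set P : ℝ → ℝ × (Fin n → ℝ) × (Fin n → ℝ) × ℝ :=
    fun s => (s, x s, deriv x s, z s) with hPdef
  set lx : ℝ → ℝ := fun s => fderiv ℝ F (P s) dX with hlxdef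
  set lv : ℝ → ℝ := fun s => fderiv ℝ F (P s) dV with hlvdef
  set lz : ℝ → ℝ := fun s => fderiv ℝ F (P s) dZ with hlzdef
  -- regularity
  have hxd : Differentiable ℝ x := hx.differentiable (by norm_num)
  have hx'C1 : ContDiff ℝ 1 (deriv x) := by
    have h2 : (2 : WithTop ℕ∞) = 1 + 1 := by norm_num
    rw [h2] at hx
    exact (contDiff_succ_iff_deriv.1 hx).2.2
  have hPC1 : ContDiff ℝ 1 P :=
    contDiff_id.prodMk ((hx.of_le one_le_two).prodMk (hx'C1.prodMk hz))
  have hDF : ContDiff ℝ 1 (fderiv ℝ F) := hL.fderiv_right (by norm_num)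
  have hMC : ∀ d, ContDiff ℝ 1 fun p => fderiv ℝ F p d :=
    fun d => hDF.clm_apply contDiff_const
  have hlxC : ContDiff ℝ 1 lx := (hMC dX).comp hPC1
  have hlvC : ContDiff ℝ 1 lv := (hMC dV).comp hPC1
  have hlzC : ContDiff ℝ 1 lz := (hMC dZ).comp hPC1
  have hlxc : Continuous lx := hlxC.continuous
  have hlvc : Continuous lv := hlvC.continuous
  have hlzc : Continuous lz := hlzC.continuous
  have hlvdiff : Differentiable ℝ lv := hlvC.differentiable (by norm_num)
  have hlv'c : Continuous (deriv lv) := hlvC.continuous_deriv le_rfl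
  -- identification of the goal derivatives
  have key_v : ∀ s, deriv
      (fun vi => L s (x s) (Function.update (deriv x s) i vi) (z s)) (deriv x s i) = lv s := by
    intro s
    have h1 : HasDerivAt (fun vi : ℝ => (s, x s, Function.update (deriv x s) i vi, z s))
        dV (deriv x s i) :=
      (hasDerivAt_const _ _).prodMk ((hasDerivAt_const _ _).prodMk
        ((hasDerivAt_update (deriv x s) i (deriv x s i)).prodMk (hasDerivAt_const _ _)))
    have h2 := (hFd _).hasFDerivAt.comp_hasDerivAt _ h1
    rw [Function.update_eq_self] at h2
    exact h2.deriv
  have key_x : ∀ s, deriv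
      (fun xi => L s (Function.update (x s) i xi) (deriv x s) (z s)) (x s i) = lx s := by
    intro s
    have h1 : HasDerivAt (fun xi : ℝ => (s, Function.update (x s) i xi, deriv x s, z s))
        dX (x s i) :=
      (hasDerivAt_const _ _).prodMk ((hasDerivAt_update (x s) i (x s i)).prodMk
        ((hasDerivAt_const _ _).prodMk (hasDerivAt_const _ _)))
    have h2 := (hFd _).hasFDerivAt.comp_hasDerivAt _ h1
    rw [Function.update_eq_self] at h2
    exact h2.deriv
  have key_z : ∀ s, deriv (fun w => L s (x s) (deriv x s) w) (z s) = lz s := by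
    intro s
    have h1 : HasDerivAt (fun w : ℝ => (s, x s, deriv x s, w)) dZ (z s) :=
      (hasDerivAt_const _ _).prodMk ((hasDerivAt_const _ _).prodMk
        ((hasDerivAt_const _ _).prodMk (hasDerivAt_id _)))
    have h2 := (hFd _).hasFDerivAt.comp_hasDerivAt _ h1
    exact h2.deriv
  rw [funext key_v, key_x t₀, key_z t₀, key_v t₀]
  by_contra hne
  set g : ℝ → ℝ := fun s => deriv lv s - lx s - lz s * lv s with hgdef
  have hgc : Continuous g := (hlv'c.sub hlxc).sub (hlzc.mul hlvc)
  have hgt₀ : g t₀ ≠ 0 := by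
    intro h
    apply hne
    have h' : deriv lv t₀ - lx t₀ - lz t₀ * lv t₀ = 0 := h
    linarith
  obtain ⟨t₁, hgt₁, ht₁⟩ : ∃ t₁, g t₁ ≠ 0 ∧ t₁ ∈ Ioo a b := by
    have hcl : t₀ ∈ closure (Ioo a b) := by rw [closure_Ioo hab.ne]; exact ht₀
    have hU : IsOpen {s | g s ≠ 0} := isOpen_ne.preimage hgc
    obtain ⟨t₁, h1, h2⟩ := mem_closure_iff_nhds.1 hcl _ (hU.mem_nhds hgt₀)
    exact ⟨t₁, h1, h2⟩
  set c₁ : ℝ := if 0 < g t₁ then 1 else -1 with hc₁def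
  have hc₁pos : 0 < c₁ * g t₁ := by
    rcases lt_trichotomy (g t₁) 0 with h | h | h
    · rw [hc₁def, if_neg (by linarith)]; nlinarith
    · exact absurd h hgt₁
    · rw [hc₁def, if_pos h]; linarith
  have hSopen : IsOpen ({s | 0 < c₁ * g s} ∩ Ioo a b) :=
    (isOpen_lt continuous_const (continuous_const.mul hgc)).inter isOpen_Ioo
  obtain ⟨ε, hεpos, hball⟩ := Metric.isOpen_iff.1 hSopen t₁ ⟨hc₁pos, ht₁⟩
  let φb : ContDiffBump t₁ := ⟨ε/2, ε, by positivity, by linarith⟩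
  set φ : ℝ → ℝ := fun s => φb s with hφdef
  have hφC2 : ContDiff ℝ 2 φ := φb.contDiff
  have hφc : Continuous φ := hφC2.continuous
  have hφd : Differentiable ℝ φ := hφC2.differentiable (by norm_num)
  have hφ'c : Continuous (deriv φ) := hφC2.continuous_deriv one_le_two
  have hφsupp : ∀ s, s ∉ Metric.ball t₁ ε → φ s = 0 := by
    intro s hs
    have hsup : Function.support φ = Metric.ball t₁ ε := φb.support_eq
    rw [← hsup] at hs
    exact Function.notMem_support.1 hs
  have hφnn : ∀ s, 0 ≤ φ s := fun s => φb.nonneg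
  have hφone : ∀ s ∈ Metric.closedBall t₁ (ε/2), φ s = 1 :=
    fun s hs => φb.one_of_mem_closedBall hs
  have hballIoo : Metric.ball t₁ ε ⊆ Ioo a b := fun s hs => (hball hs).2
  have hφa : φ a = 0 := hφsupp a fun h => lt_irrefl a (hballIoo h).1
  have hφb0 : φ b = 0 := hφsupp b fun h => lt_irrefl b (hballIoo h).2
  set η : ℝ → Fin n → ℝ := fun s => φ s • e with hηdef
  have hηC2 : ContDiff ℝ 2 η := hφC2.smul contDiff_const
  have hη' : ∀ s, deriv η s = deriv φ s • e :=
    fun s => (((hφd s).hasDerivAt).smul_const e).deriv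
  have hηa : η a = 0 := by show φ a • e = 0; rw [hφa, zero_smul]
  have hηb : η b = 0 := by show φ b • e = 0; rw [hφb0, zero_smul]
  obtain ⟨Z, hZC2, hZ0, hZode, hZa, hZb⟩ := hvar η hηC2 hηa hηb
  set Zu : ℝ × ℝ → ℝ := fun p => Z p.1 p.2 with hZudef
  have hZud : Differentiable ℝ Zu := hZC2.differentiable (by norm_num)
  set Gz : ℝ × ℝ → (ℝ × ℝ) →L[ℝ] ℝ := fderiv ℝ Zu with hGzdef
  have hGzC1 : ContDiff ℝ 1 Gz := hZC2.fderiv_right (by norm_num)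
  have hGzd : Differentiable ℝ Gz := hGzC1.differentiable (by norm_num)
  set ζ : ℝ → ℝ := fun s => Gz (0, s) (1, 0) with hζdef
  have hζC1 : ContDiff ℝ 1 ζ :=
    (hGzC1.clm_apply contDiff_const).comp (contDiff_const.prodMk contDiff_id)
  have hζeps : ∀ s₀ : ℝ, HasDerivAt (fun ε => Z ε s₀) (ζ s₀) 0 := by
    intro s₀
    have hc : HasDerivAt (fun ε : ℝ => (ε, s₀)) ((1 : ℝ), (0 : ℝ)) 0 :=
      (hasDerivAt_id 0).prodMk (hasDerivAt_const 0 s₀)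
    exact (hZud (0, s₀)).hasFDerivAt.comp_hasDerivAt 0 hc
  have hζa0 : ζ a = 0 := by
    have h1 := (hζeps a).deriv
    have h2 : (fun ε => Z ε a) = fun _ => z_a := funext hZa
    rw [h2, deriv_const] at h1
    exact h1.symm
  have hζb0 : ζ b = 0 := by
    have h1 := (hζeps b).deriv
    rw [h1] at hZb
    exact hZb
  have hZt : ∀ (ε s : ℝ), HasDerivAt (fun s' => Z ε s') (Gz (ε, s) (0, 1)) s := by
    intro ε s
    have hc : HasDerivAt (fun s' : ℝ => (ε, s')) ((0 : ℝ), (1 : ℝ)) s :=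
      (hasDerivAt_const s ε).prodMk (hasDerivAt_id s)
    exact (hZud (ε, s)).hasFDerivAt.comp_hasDerivAt s hc
  have hGzode : ∀ ε : ℝ, ∀ s ∈ Icc a b,
      Gz (ε, s) (0, 1) = F (s, x s + ε • η s, deriv x s + ε • deriv η s, Z ε s) := by
    intro ε s hs
    rw [← (hZt ε s).deriv]
    exact hZode ε s hs
  have hζ' : ∀ s ∈ Icc a b,
      HasDerivAt ζ (φ s * lx s + deriv φ s * lv s + ζ s * lz s) s := by
    intro s hs
    have hc1 : HasDerivAt (fun s' : ℝ => ((0 : ℝ), s')) ((0 : ℝ), (1 : ℝ)) s :=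
      (hasDerivAt_const s (0 : ℝ)).prodMk (hasDerivAt_id s)
    have hG1 : HasDerivAt (fun s' => Gz (0, s')) (fderiv ℝ Gz (0, s) (0, 1)) s :=
      (hGzd (0, s)).hasFDerivAt.comp_hasDerivAt s hc1
    have hζd : HasDerivAt ζ (fderiv ℝ Gz (0, s) (0, 1) (1, 0)) s := by
      have h := hG1.clm_apply (hasDerivAt_const s ((1 : ℝ), (0 : ℝ)))
      simpa using h
    have hc2 : HasDerivAt (fun ε : ℝ => (ε, s)) ((1 : ℝ), (0 : ℝ)) 0 :=
      (hasDerivAt_id 0).prodMk (hasDerivAt_const 0 s)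
    have hG2 : HasDerivAt (fun ε => Gz (ε, s)) (fderiv ℝ Gz (0, s) (1, 0)) 0 :=
      (hGzd (0, s)).hasFDerivAt.comp_hasDerivAt 0 hc2
    have hε1 : HasDerivAt (fun ε => Gz (ε, s) (0, 1))
        (fderiv ℝ Gz (0, s) (1, 0) (0, 1)) 0 := by
      have h := hG2.clm_apply (hasDerivAt_const 0 ((0 : ℝ), (1 : ℝ)))
      simpa using h
    have hcc : HasDerivAt
        (fun ε : ℝ => (s, x s + ε • η s, deriv x s + ε • deriv η s, Z ε s))
        ((0 : ℝ), η s, deriv η s, ζ s) 0 := by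
      refine (hasDerivAt_const 0 s).prodMk (HasDerivAt.prodMk ?_ (HasDerivAt.prodMk ?_ (hζeps s)))
      · simpa using ((hasDerivAt_id (0 : ℝ)).smul_const (η s)).const_add (x s)
      · simpa using ((hasDerivAt_id (0 : ℝ)).smul_const (deriv η s)).const_add (deriv x s)
    have hF2 := (hFd _).hasFDerivAt.comp_hasDerivAt 0 hcc
    have hpt : (s, x s + (0 : ℝ) • η s, deriv x s + (0 : ℝ) • deriv η s, Z 0 s) = P s := by
      rw [hZ0 s hs]; simp [hPdef]
    rw [hpt] at hF2
    have hfun : (fun ε => Gz (ε, s) (0, 1))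
        = fun ε : ℝ => F (s, x s + ε • η s, deriv x s + ε • deriv η s, Z ε s) :=
      funext fun ε => hGzode ε s hs
    rw [hfun] at hε1
    have hswap : fderiv ℝ Gz (0, s) (0, 1) (1, 0) = fderiv ℝ Gz (0, s) (1, 0) (0, 1) :=
      (hZC2.contDiffAt.isSymmSndFDerivAt (by simp [minSmoothness])) (0, 1) (1, 0)
    have huniq : fderiv ℝ Gz (0, s) (1, 0) (0, 1)
        = fderiv ℝ F (P s) (0, η s, deriv η s, ζ s) := hε1.unique hF2
    have hdir : ((0 : ℝ), η s, deriv η s, ζ s) = φ s • dX + deriv φ s • dV + ζ s • dZ := by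
      rw [hη' s]
      simp [hdX, hdV, hdZ, hηdef, Prod.ext_iff, smul_eq_mul]
    have hval : fderiv ℝ F (P s) (0, η s, deriv η s, ζ s)
        = φ s * lx s + deriv φ s * lv s + ζ s * lz s := by
      rw [hdir]
      simp [map_add, _root_.map_smul, smul_eq_mul, hlxdef, hlvdef, hlzdef]
    rw [← hval, ← huniq, ← hswap]
    exact hζd
  -- integrating factor
  set A : ℝ → ℝ := fun s => ∫ u in a..s, lz u with hAdef
  have hAd : ∀ s, HasDerivAt A (lz s) s := fun s =>
    integral_hasDerivAt_right (hlzc.intervalIntegrable a s)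
      hlzc.stronglyMeasurable.stronglyMeasurableAtFilter hlzc.continuousAt
  have hAc : Continuous A := (Differentiable.continuous fun s => (hAd s).differentiableAt)
  have hexp : ∀ s, HasDerivAt (fun u => Real.exp (-(A u)))
      (Real.exp (-(A s)) * (-(lz s))) s := fun s => ((hAd s).neg).exp
  have hexpc : Continuous fun s => Real.exp (-(A s)) := Real.continuous_exp.comp hAc.neg
  -- FTC for the integrating-factor times ζ
  have hW : ∀ s ∈ uIcc a b, HasDerivAt (fun u => Real.exp (-(A u)) * ζ u)
      (Real.exp (-(A s)) * (φ s * lx s + deriv φ s * lv s)) s := by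
    intro s hs
    rw [uIcc_of_le hab.le] at hs
    have h := (hexp s).mul (hζ' s hs)
    refine h.congr_deriv ?_
    ring
  have hIcont : Continuous fun s => Real.exp (-(A s)) * (φ s * lx s + deriv φ s * lv s) :=
    hexpc.mul ((hφc.mul hlxc).add (hφ'c.mul hlvc))
  have hFTC0 : ∫ s in a..b, Real.exp (-(A s)) * (φ s * lx s + deriv φ s * lv s) = 0 := by
    rw [integral_eq_sub_of_hasDerivAt hW (hIcont.intervalIntegrable a b), hζa0, hζb0]
    ring
  -- split the integral
  have i1 : IntervalIntegrable (fun s => Real.exp (-(A s)) * (φ s * lx s)) volume a b :=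
    (hexpc.mul (hφc.mul hlxc)).intervalIntegrable a b
  have i2 : IntervalIntegrable (fun s => Real.exp (-(A s)) * lv s * deriv φ s) volume a b :=
    ((hexpc.mul hlvc).mul hφ'c).intervalIntegrable a b
  have hsplit : (∫ s in a..b, Real.exp (-(A s)) * (φ s * lx s + deriv φ s * lv s))
      = (∫ s in a..b, Real.exp (-(A s)) * (φ s * lx s))
        + ∫ s in a..b, Real.exp (-(A s)) * lv s * deriv φ s := by
    rw [← integral_add i1 i2]
    apply integral_congr
    intro s _
    ring
  -- integration by parts
  have hu' : ∀ s, HasDerivAt (fun u => Real.exp (-(A u)) * lv u)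
      (Real.exp (-(A s)) * (deriv lv s - lz s * lv s)) s := by
    intro s
    have h := (hexp s).mul ((hlvdiff s).hasDerivAt)
    refine h.congr_deriv ?_
    ring
  have hu'c : Continuous fun s => Real.exp (-(A s)) * (deriv lv s - lz s * lv s) :=
    hexpc.mul (hlv'c.sub (hlzc.mul hlvc))
  have hIBP : ∫ s in a..b, Real.exp (-(A s)) * lv s * deriv φ s
      = Real.exp (-(A b)) * lv b * φ b - Real.exp (-(A a)) * lv a * φ a
        - ∫ s in a..b, Real.exp (-(A s)) * (deriv lv s - lz s * lv s) * φ s :=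
    integral_mul_deriv_eq_deriv_mul (fun s _ => hu' s) (fun s _ => (hφd s).hasDerivAt)
      (hu'c.intervalIntegrable a b) (hφ'c.intervalIntegrable a b)
  have i3 : IntervalIntegrable
      (fun s => Real.exp (-(A s)) * (deriv lv s - lz s * lv s) * φ s) volume a b :=
    (hu'c.mul hφc).intervalIntegrable a b
  -- the key integral identity
  have hI13 : (∫ s in a..b, Real.exp (-(A s)) * (φ s * lx s))
      - (∫ s in a..b, Real.exp (-(A s)) * (deriv lv s - lz s * lv s) * φ s)
      = -∫ s in a..b, Real.exp (-(A s)) * φ s * g s := by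
    rw [← integral_sub i1 i3, ← intervalIntegral.integral_neg]
    apply integral_congr
    intro s _
    simp only [hgdef]
    ring
  have hk0 : ∫ s in a..b, Real.exp (-(A s)) * φ s * g s = 0 := by
    rw [hφa, hφb0] at hIBP
    have h12 := hFTC0
    rw [hsplit] at h12
    have := hI13
    linarith [hIBP, h12, hI13]
  have hK0 : ∫ s in a..b, Real.exp (-(A s)) * φ s * (c₁ * g s) = 0 := by
    have h : (∫ s in a..b, Real.exp (-(A s)) * φ s * (c₁ * g s))
        = c₁ * ∫ s in a..b, Real.exp (-(A s)) * φ s * g s := by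
      rw [← intervalIntegral.integral_const_mul]
      apply integral_congr
      intro s _
      ring
    rw [h, hk0, mul_zero]
  -- positivity of the same integral: contradiction
  have hKc : Continuous fun s => Real.exp (-(A s)) * φ s * (c₁ * g s) :=
    (hexpc.mul hφc).mul (continuous_const.mul hgc)
  have hKnn : ∀ s, 0 ≤ Real.exp (-(A s)) * φ s * (c₁ * g s) := by
    intro s
    by_cases hs : s ∈ Metric.ball t₁ ε
    · exact mul_nonneg (mul_nonneg (Real.exp_pos _).le (hφnn s)) (hball hs).1.le
    · rw [hφsupp s hs]
      simp
  have hmem1 : t₁ - ε/2 ∈ Metric.ball t₁ ε := by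
    rw [Metric.mem_ball, Real.dist_eq]
    rw [abs_lt]
    constructor <;> linarith
  have hmem2 : t₁ + ε/2 ∈ Metric.ball t₁ ε := by
    rw [Metric.mem_ball, Real.dist_eq]
    rw [abs_lt]
    constructor <;> linarith
  have hlt1 : a < t₁ - ε/2 := (hballIoo hmem1).1
  have hlt2 : t₁ + ε/2 < b := (hballIoo hmem2).2
  have hmid : 0 < ∫ s in (t₁ - ε/2)..(t₁ + ε/2), Real.exp (-(A s)) * φ s * (c₁ * g s) := by
    apply intervalIntegral_pos_of_pos_on (hKc.intervalIntegrable _ _) _ (by linarith)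
    intro s hs
    have hsball : s ∈ Metric.ball t₁ ε := by
      rw [Metric.mem_ball, Real.dist_eq, abs_lt]
      constructor <;> [linarith [hs.1]; linarith [hs.2]]
    have hφ1 : φ s = 1 := by
      apply hφone
      rw [Metric.mem_closedBall, Real.dist_eq, abs_le]
      constructor <;> [linarith [hs.1]; linarith [hs.2]]
    have hpos := (hball hsball).1
    rw [hφ1, mul_one]
    exact mul_pos (Real.exp_pos (-(A s))) hpos
  have h1 : 0 ≤ ∫ s in a..(t₁ - ε/2), Real.exp (-(A s)) * φ s * (c₁ * g s) :=
    integral_nonneg (by linarith) fun s _ => hKnn s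
  have h2 : 0 ≤ ∫ s in (t₁ + ε/2)..b, Real.exp (-(A s)) * φ s * (c₁ * g s) :=
    integral_nonneg (by linarith) fun s _ => hKnn s
  have e1 := integral_add_adjacent_intervals (μ := volume)
    (hKc.intervalIntegrable a (t₁ - ε/2)) (hKc.intervalIntegrable (t₁ - ε/2) (t₁ + ε/2))
  have e2 := integral_add_adjacent_intervals (μ := volume)
    (hKc.intervalIntegrable a (t₁ + ε/2)) (hKc.intervalIntegrable (t₁ + ε/2) b)
  linarith [hK0, hmid, h1, h2, e1, e2]
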